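/- Let K₁, K₂ ⊂ ℝ^4 be disjoint compact sets such that ℋ^2(K₁ × K₂) < ∞, where K₁ × K₂ ⊆ ℝ^4 × ℝ^4 carries the sup product metric. Then there exists a unit vector v ∈ ℝ^4 such that no line with direction v passing through a point of K₁ meets K₂; that is, (K₁ + ℝv) ∩ K₂ = ∅, where K₁ + ℝv = {x + tv : x ∈ K₁, t ∈ ℝ}. -/
import Mathlib


open MeasureTheory Set

noncomputable section StmtAux

/-- The "slope" map sending a pair of points to the direction of the segment,
normalized so that the last coordinate is 1. -/
noncomputable def stmtPhi (p : EuclideanSpace ℝ (Fin 4) × EuclideanSpace ℝ (Fin 4)) :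
    Fin 3 → ℝ :=
  fun i => (p.2 i.castSucc - p.1 i.castSucc) / (p.2 3 - p.1 3)

lemma stmtD_linear : IsLinearMap ℝ
    (fun p : EuclideanSpace ℝ (Fin 4) × EuclideanSpace ℝ (Fin 4) => p.2 3 - p.1 3) := by
  constructor
  · intro p q
    simp [Prod.fst_add, Prod.snd_add, PiLp.add_apply]
    ring
  · intro c p
    simp [Prod.smul_fst, Prod.smul_snd, PiLp.smul_apply, smul_eq_mul]
    ring

lemma stmt_coord_contDiff (j : Fin 4) :
    ContDiff ℝ 1 (fun p : EuclideanSpace ℝ (Fin 4) × EuclideanSpace ℝ (Fin 4) =>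
      p.2 j - p.1 j) := by
  have h2 : ContDiff ℝ 1 (fun p : EuclideanSpace ℝ (Fin 4) × EuclideanSpace ℝ (Fin 4) =>
      (EuclideanSpace.proj j : EuclideanSpace ℝ (Fin 4) →L[ℝ] ℝ) p.2) :=
    (EuclideanSpace.proj j : EuclideanSpace ℝ (Fin 4) →L[ℝ] ℝ).contDiff.comp contDiff_snd
  have h1 : ContDiff ℝ 1 (fun p : EuclideanSpace ℝ (Fin 4) × EuclideanSpace ℝ (Fin 4) =>
      (EuclideanSpace.proj j : EuclideanSpace ℝ (Fin 4) →L[ℝ] ℝ) p.1) :=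
    (EuclideanSpace.proj j : EuclideanSpace ℝ (Fin 4) →L[ℝ] ℝ).contDiff.comp contDiff_fst
  exact h2.sub h1

lemma stmtPhi_contDiffOn {s : Set (EuclideanSpace ℝ (Fin 4) × EuclideanSpace ℝ (Fin 4))}
    (hs : ∀ p ∈ s, p.2 3 - p.1 3 ≠ 0) : ContDiffOn ℝ 1 stmtPhi s := by
  rw [contDiffOn_pi]
  intro i
  exact ContDiffOn.div (stmt_coord_contDiff i.castSucc).contDiffOn
    (stmt_coord_contDiff 3).contDiffOn hs

end StmtAux

/-- **Theorem (Statement 13).** If `K₁, K₂ ⊂ ℝ⁴` are disjoint compact sets with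
`ℋ²(K₁ × K₂) < ∞` (sup product metric on `ℝ⁴ × ℝ⁴`), then there is a unit vector
`v ∈ ℝ⁴` such that no line of direction `v` through a point of `K₁` meets `K₂`. -/
theorem stmt13 (K₁ K₂ : Set (EuclideanSpace ℝ (Fin 4)))
    (h₁ : IsCompact K₁) (h₂ : IsCompact K₂) (hdisj : Disjoint K₁ K₂)
    (hH : μH[(2 : ℝ)] (K₁ ×ˢ K₂) < ⊤) :
    ∃ v : EuclideanSpace ℝ (Fin 4), ‖v‖ = 1 ∧
      ∀ x ∈ K₁, ∀ t : ℝ, x + t • v ∉ K₂ := by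
  classical
  -- Hausdorff dimension of the product set is at most 2.
  have hdim : dimH (K₁ ×ˢ K₂) ≤ 2 := by
    have : μH[((2 : NNReal) : ℝ)] (K₁ ×ˢ K₂) ≠ ⊤ := by
      push_cast
      exact hH.ne
    simpa using dimH_le_of_hausdorffMeasure_ne_top this
  -- The two halves on which the slope map is smooth.
  set Sp : Set (EuclideanSpace ℝ (Fin 4) × EuclideanSpace ℝ (Fin 4)) :=
    {p | 0 < p.2 3 - p.1 3} with hSp
  set Sm : Set (EuclideanSpace ℝ (Fin 4) × EuclideanSpace ℝ (Fin 4)) :=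
    {p | p.2 3 - p.1 3 < 0} with hSm
  have hSpConv : Convex ℝ Sp := convex_halfSpace_gt stmtD_linear 0
  have hSmConv : Convex ℝ Sm := convex_halfSpace_lt stmtD_linear 0
  have hcdp : ContDiffOn ℝ 1 stmtPhi Sp := stmtPhi_contDiffOn fun p hp => ne_of_gt hp
  have hcdm : ContDiffOn ℝ 1 stmtPhi Sm := stmtPhi_contDiffOn fun p hp => ne_of_lt hp
  -- The set of "bad" slopes.
  set B : Set (Fin 3 → ℝ) :=
    stmtPhi '' ((K₁ ×ˢ K₂) ∩ Sp) ∪ stmtPhi '' ((K₁ ×ˢ K₂) ∩ Sm) with hB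
  have hdimB : dimH B < 3 := by
    have h1 : dimH (stmtPhi '' ((K₁ ×ˢ K₂) ∩ Sp)) ≤ 2 :=
      le_trans (hcdp.dimH_image_le hSpConv inter_subset_right)
        (le_trans (dimH_mono inter_subset_left) hdim)
    have h2 : dimH (stmtPhi '' ((K₁ ×ˢ K₂) ∩ Sm)) ≤ 2 :=
      le_trans (hcdm.dimH_image_le hSmConv inter_subset_right)
        (le_trans (dimH_mono inter_subset_left) hdim)
    calc dimH B ≤ 2 := by rw [hB, dimH_union]; exact max_le h1 h2
      _ < 3 := by norm_num
  -- Pick a good slope `w`.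
  have hdense : Dense Bᶜ := by
    apply dense_compl_of_dimH_lt_finrank
    have : Module.finrank ℝ (Fin 3 → ℝ) = 3 := by simp
    rw [this]
    exact_mod_cast hdimB
  obtain ⟨w, hw⟩ := hdense.nonempty
  -- Build the direction vector.
  set u : EuclideanSpace ℝ (Fin 4) := (WithLp.equiv 2 (Fin 4 → ℝ)).symm (Fin.snoc w 1) with hu
  have hu3 : u 3 = 1 := by
    show (Fin.snoc w 1 : Fin 4 → ℝ) 3 = 1
    have : (3 : Fin 4) = Fin.last 3 := rfl
    rw [this, Fin.snoc_last]
  have hui : ∀ i : Fin 3, u i.castSucc = w i := by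
    intro i
    show (Fin.snoc w 1 : Fin 4 → ℝ) i.castSucc = w i
    rw [Fin.snoc_castSucc]
  have hune : u ≠ 0 := by
    intro h
    rw [h] at hu3
    simp [PiLp.zero_apply] at hu3
  refine ⟨‖u‖⁻¹ • u, norm_smul_inv_norm hune, ?_⟩
  intro x hx t hy
  set y : EuclideanSpace ℝ (Fin 4) := x + t • (‖u‖⁻¹ • u) with hydef
  have hcoord : ∀ i : Fin 4, y i - x i = (t * ‖u‖⁻¹) * u i := by
    intro i
    rw [hydef]
    simp [PiLp.add_apply, PiLp.smul_apply, smul_eq_mul]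
    ring
  have hupos : (0 : ℝ) < ‖u‖⁻¹ := inv_pos.2 (norm_pos_iff.2 hune)
  have htne : t ≠ 0 := by
    intro h
    rw [h] at hydef
    simp at hydef
    rw [hydef] at hy
    exact (disjoint_left.1 hdisj hx) hy
  set s : ℝ := t * ‖u‖⁻¹ with hs
  have hsne : s ≠ 0 := mul_ne_zero htne (ne_of_gt hupos)
  have hd : y 3 - x 3 = s := by rw [hcoord 3, hu3, mul_one]
  have hmem : (x, y) ∈ K₁ ×ˢ K₂ := ⟨hx, hy⟩
  have hphi : stmtPhi (x, y) = w := by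
    funext i
    show (y i.castSucc - x i.castSucc) / (y 3 - x 3) = w i
    rw [hcoord i.castSucc, hd, hui i]
    field_simp
  apply hw
  rcases lt_or_gt_of_ne hsne with hneg | hpos
  · refine Or.inr ⟨(x, y), ⟨hmem, ?_⟩, hphi⟩
    show y 3 - x 3 < 0
    rw [hd]; exact hneg
  · refine Or.inl ⟨(x, y), ⟨hmem, ?_⟩, hphi⟩
    show 0 < y 3 - x 3
    rw [hd]; exact hpos
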